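/- The rank function of a loopless matroid M is 3-alternating if and only if every circuit of M has size at most 2 (equivalently M is a partition matroid with upper bound 1 on each class). In particular, if M has a circuit C of size at least 3, then for any partition of C into nonempty parts A_1, A_2, A_3 one has V_r(∅; A_1, A_2, A_3) = 1 > 0. -/

import Mathlib

/-- `altSumZ r A₀ A = Σ_{K ⊆ [k]} (-1)^{|K|} r(A₀ ∪ ⋃_{i∈K} A_i)` (integer valued). -/
noncomputable def altSumZ {J : Type*} (r : Set J → ℤ) (A₀ : Set J) {k : ℕ}
    (A : Fin k → Set J) : ℤ :=
  ∑ K : Finset (Fin k), (-1 : ℤ) ^ K.card * r (A₀ ∪ ⋃ i ∈ K, A i)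

/-- `r` satisfies the matroid rank axioms on the finite set `J`. -/
def IsRankFn {J : Type*} [Fintype J] (r : Set J → ℤ) : Prop :=
  r ∅ = 0 ∧ (∀ X Y : Set J, X ⊆ Y → r X ≤ r Y) ∧
    (∀ X : Set J, r X ≤ X.ncard) ∧
    (∀ X Y : Set J, r (X ∩ Y) + r (X ∪ Y) ≤ r X + r Y)

/-- A circuit: a minimal dependent set. -/
def IsCircuit {J : Type*} [Fintype J] (r : Set J → ℤ) (C : Set J) : Prop :=
  r C < C.ncard ∧ ∀ Y : Set J, Y ⊂ C → r Y = Y.ncard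

section Aux

set_option linter.unusedSectionVars false

lemma ncard_eq_sum {β : Type*} [Fintype β] (S : Set β) :
    ((S.ncard : ℤ)) = ∑ x : β, S.indicator (fun _ => (1:ℤ)) x := by
  classical
  rw [Set.ncard_eq_toFinset_card' S,
    ← Finset.sum_subset (Finset.subset_univ S.toFinset)
      (fun x _ hx => Set.indicator_of_notMem (by simpa using hx) _),
    Finset.sum_congr rfl (fun x hx => Set.indicator_of_mem (by simpa using hx) _)]
  simp

lemma neg_one_pow_prod {β : Type*} [Fintype β] [DecidableEq β] (y : β → ℤ) :
    ∑ K : Finset β, (-1:ℤ)^K.card * ∏ i ∈ K, y i = ∏ i : β, (1 - y i) := by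
  have h := Finset.prod_add (fun i => -y i) (fun _ => (1:ℤ)) Finset.univ
  simp only [Finset.prod_const_one, mul_one] at h
  rw [show (∏ i : β, (1 - y i)) = ∏ i : β, (-y i + 1) from
    Finset.prod_congr rfl fun i _ => by ring, h, Finset.powerset_univ]
  apply Finset.sum_congr rfl
  intro K _
  rw [show (∏ i ∈ K, -y i) = ∏ i ∈ K, (-1) * y i from
    Finset.prod_congr rfl fun i _ => by ring, Finset.prod_mul_distrib, Finset.prod_const]

lemma sum_neg_one_pow (β : Type*) [Fintype β] [DecidableEq β] [Nonempty β] :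
    ∑ K : Finset β, (-1:ℤ)^K.card = 0 := by
  rw [← Finset.powerset_univ, Finset.sum_powerset_neg_one_pow_card,
    if_neg Finset.univ_nonempty.ne_empty]

lemma key_card {β : Type*} [Fintype β] (B₀ : Set β) (B : Fin 3 → Set β) :
    altSumZ (fun X => (X.ncard : ℤ)) B₀ B = -((B₀ᶜ ∩ ⋂ i, B i).ncard : ℤ) := by
  classical
  unfold altSumZ
  simp only [ncard_eq_sum, Finset.mul_sum]
  rw [Finset.sum_comm, ← Finset.sum_neg_distrib]
  apply Finset.sum_congr rfl
  intro x _
  by_cases hx0 : x ∈ B₀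
  · have this1 : ∀ K : Finset (Fin 3),
        (-1:ℤ)^K.card * (B₀ ∪ ⋃ i ∈ K, B i).indicator (fun _ => (1:ℤ)) x = (-1:ℤ)^K.card := by
      intro K
      rw [Set.indicator_of_mem (Set.mem_union_left _ hx0), mul_one]
    rw [Finset.sum_congr rfl fun K _ => this1 K, sum_neg_one_pow,
      Set.indicator_of_notMem (by simp [hx0]), neg_zero]
  · have h1 : ∀ K : Finset (Fin 3), (B₀ ∪ ⋃ i ∈ K, B i).indicator (fun _ => (1:ℤ)) x
        = 1 - ∏ i ∈ K, (1 - (B i).indicator (fun _ => (1:ℤ)) x) := by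
      intro K
      by_cases hex : ∃ i ∈ K, x ∈ B i
      · obtain ⟨i, hiK, hi⟩ := hex
        have hmem : x ∈ B₀ ∪ ⋃ i ∈ K, B i := by
          simp only [Set.mem_union, Set.mem_iUnion]; exact Or.inr ⟨i, hiK, hi⟩
        rw [Set.indicator_of_mem hmem,
          Finset.prod_eq_zero hiK (by rw [Set.indicator_of_mem hi]; ring)]
        norm_num
      · have hmem : x ∉ B₀ ∪ ⋃ i ∈ K, B i := by
          intro h
          rcases h with h | h
          · exact hx0 h
          · simp only [Set.mem_iUnion] at h; obtain ⟨i, hi, h⟩ := h; exact hex ⟨i, hi, h⟩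
        rw [Set.indicator_of_notMem hmem, Finset.prod_eq_one (by
          intro i hi
          rw [Set.indicator_of_notMem (fun h => hex ⟨i, hi, h⟩)]
          ring)]
        norm_num
    have split : ∀ K : Finset (Fin 3),
        (-1:ℤ)^K.card * (B₀ ∪ ⋃ i ∈ K, B i).indicator (fun _ => (1:ℤ)) x
        = (-1:ℤ)^K.card - (-1:ℤ)^K.card *
            ∏ i ∈ K, (1 - (B i).indicator (fun _ => (1:ℤ)) x) := by
      intro K; rw [h1 K]; ring
    rw [Finset.sum_congr rfl fun K _ => split K, Finset.sum_sub_distrib,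
      sum_neg_one_pow, neg_one_pow_prod, zero_sub]
    simp only [sub_sub_cancel]
    by_cases hall : ∀ i, x ∈ B i
    · rw [Finset.prod_eq_one (fun i _ => Set.indicator_of_mem (hall i) _),
        Set.indicator_of_mem (by simp [hx0, Set.mem_iInter, hall])]
    · push_neg at hall
      obtain ⟨i, hi⟩ := hall
      rw [Finset.prod_eq_zero (Finset.mem_univ i) (Set.indicator_of_notMem hi _),
        Set.indicator_of_notMem (by simp [Set.mem_iInter]; exact fun _ => ⟨i, hi⟩)]

variable {J : Type*} [Fintype J]

lemma exists_circuit (r : Set J → ℤ) (hr : IsRankFn r) :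
    ∀ X : Set J, r X < X.ncard → ∃ C, C ⊆ X ∧ IsCircuit r C := by
  have H : ∀ n (X : Set J), X.ncard = n → r X < X.ncard → ∃ C, C ⊆ X ∧ IsCircuit r C := by
    intro n
    induction n using Nat.strong_induction_on with
    | _ n ih =>
      intro X hn hX
      by_cases h : ∀ Y : Set J, Y ⊂ X → r Y = Y.ncard
      · exact ⟨X, subset_rfl, hX, h⟩
      · push_neg at h
        obtain ⟨Y, hYX, hY⟩ := h
        have h1 : r Y < Y.ncard := lt_of_le_of_ne (hr.2.2.1 Y) hY
        have h2 : Y.ncard < n := hn ▸ Set.ncard_lt_ncard hYX (Set.toFinite X)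
        obtain ⟨C, hCY, hC⟩ := ih _ h2 Y rfl h1
        exact ⟨C, hCY.trans hYX.subset, hC⟩
  exact fun X => H X.ncard X rfl

/-- transitivity-type helper -/
lemma par_trans (r : Set J → ℤ) (hr : IsRankFn r) (hl : ∀ x : J, r {x} = 1)
    (x y z : J) (hxy : r {x, y} ≤ 1) (hxz : r {x, z} ≤ 1) : r {y, z} ≤ 1 := by
  have hsub := hr.2.2.2 {x, y} {x, z}
  have h1 : r {x} ≤ r ({x, y} ∩ {x, z}) := by
    apply hr.2.1
    intro a ha
    simp only [Set.mem_singleton_iff] at ha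
    subst ha
    exact ⟨by simp, by simp⟩
  have h2 : r {y, z} ≤ r ({x, y} ∪ {x, z}) := by
    apply hr.2.1
    intro a ha
    rcases ha with ha | ha
    · exact Or.inl (Or.inr ha)
    · exact Or.inr (Or.inr ha)
  rw [hl x] at h1
  linarith

/-- the parallel class of `x` -/
noncomputable def parCls (r : Set J → ℤ) (x : J) : Set J := {y | r {x, y} ≤ 1}

lemma parCls_self (r : Set J → ℤ) (hl : ∀ x : J, r {x} = 1) (x : J) : x ∈ parCls r x := by
  simp [parCls, Set.pair_eq_singleton, hl x]

lemma parCls_eq (r : Set J → ℤ) (hr : IsRankFn r) (hl : ∀ x : J, r {x} = 1)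
    {x y : J} (hxy : r {x, y} ≤ 1) : parCls r x = parCls r y := by
  have hyx : r ({y, x} : Set J) ≤ 1 := by rwa [Set.pair_comm]
  ext z
  constructor
  · exact fun hz => par_trans r hr hl x y z hxy hz
  · exact fun hz => par_trans r hr hl y x z hyx hz

lemma parCls_rel (r : Set J → ℤ) (hl : ∀ x : J, r {x} = 1)
    {x y : J} (h : parCls r x = parCls r y) : r {x, y} ≤ 1 := by
  have : y ∈ parCls r x := h ▸ parCls_self r hl y
  exact this

lemma rank_eq_classes (r : Set J → ℤ) (hr : IsRankFn r) (hl : ∀ x : J, r {x} = 1)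
    (hC : ∀ C : Set J, IsCircuit r C → C.ncard ≤ 2) (X : Set J) :
    r X = ((parCls r '' X).ncard : ℤ) := by
  have H : ∀ n (X : Set J), X.ncard = n → r X = ((parCls r '' X).ncard : ℤ) := by
    intro n
    induction n using Nat.strong_induction_on with
    | _ n ih =>
      intro X hn
      by_cases hcase : ∃ x ∈ X, ∃ y ∈ X, x ≠ y ∧ r {x, y} ≤ 1
      · obtain ⟨x, hx, y, hy, hne, hxy⟩ := hcase
        have hXy : X \ {y} ⊆ X := Set.diff_subset
        have hxd : x ∈ X \ {y} := ⟨hx, by simpa using hne⟩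
        have hrle : r X ≤ r (X \ {y}) := by
          have hsub := hr.2.2.2 (X \ {y}) {x, y}
          have h1 : r {x} ≤ r ((X \ {y}) ∩ {x, y}) := by
            apply hr.2.1
            intro a ha
            simp only [Set.mem_singleton_iff] at ha
            subst ha
            exact ⟨hxd, by simp⟩
          have h2 : (X \ {y}) ∪ {x, y} = X := by
            apply Set.Subset.antisymm
            · rintro a (ha | ha)
              · exact ha.1
              · rcases ha with ha | ha
                · subst ha; exact hx
                · simp only [Set.mem_singleton_iff] at ha; subst ha; exact hy
            · intro a ha
              by_cases hay : a = y
              · exact Or.inr (Or.inr (by simp [hay]))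
              · exact Or.inl ⟨ha, hay⟩
          rw [h2] at hsub
          rw [hl x] at h1
          linarith
        have hreq : r X = r (X \ {y}) :=
          le_antisymm hrle (hr.2.1 _ _ hXy)
        have himg : parCls r '' X = parCls r '' (X \ {y}) := by
          apply Set.Subset.antisymm
          · rintro _ ⟨a, ha, rfl⟩
            by_cases hay : a = y
            · subst hay
              exact ⟨x, hxd, parCls_eq r hr hl hxy⟩
            · exact ⟨a, ⟨ha, hay⟩, rfl⟩
          · exact Set.image_mono hXy
        have hlt : (X \ {y}).ncard < n := hn ▸
          Set.ncard_lt_ncard (by exact ⟨hXy, fun h => (h hy).2 rfl⟩) (Set.toFinite X)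
        rw [hreq, himg, ih _ hlt _ rfl]
      · push_neg at hcase
        have hinj : Set.InjOn (parCls r) X := by
          intro a ha b hb hab
          by_contra hne
          exact absurd (parCls_rel r hl hab) (not_le.2 (hcase a ha b hb hne))
        rw [Set.ncard_image_of_injOn hinj]
        refine le_antisymm (hr.2.2.1 X) ?_
        by_contra hlt
        push_neg at hlt
        obtain ⟨C, hCX, hCirc⟩ := exists_circuit r hr X hlt
        have hC2 := hC C hCirc
        interval_cases h : C.ncard
        · rw [Set.ncard_eq_zero (Set.toFinite C)] at h
          rw [h] at hCirc
          have := hCirc.1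
          simp [hr.1] at this
        · rw [Set.ncard_eq_one] at h
          obtain ⟨a, rfl⟩ := h
          have := hCirc.1
          simp [hl a, Set.ncard_singleton] at this
        · rw [Set.ncard_eq_two] at h
          obtain ⟨a, b, hab, rfl⟩ := h
          have h1 := hCirc.1
          rw [Set.ncard_pair hab] at h1
          have h2 := hcase a (hCX (by simp)) b (hCX (by simp)) hab
          push_cast at h1
          linarith
  exact H X.ncard X rfl

lemma circuit_altSum (r : Set J → ℤ) (hr : IsRankFn r)
    (C : Set J) (hCirc : IsCircuit r C) (h3 : 3 ≤ C.ncard)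
    (A : Fin 3 → Set J) (hne : ∀ i, (A i).Nonempty)
    (hdisj : ∀ i j, i ≠ j → Disjoint (A i) (A j)) (hU : (⋃ i, A i) = C) :
    altSumZ r ∅ A = 1 := by
  classical
  have hAC : ∀ i, A i ⊆ C := fun i => hU ▸ Set.subset_iUnion A i
  obtain ⟨x, hx⟩ : C.Nonempty := Set.nonempty_of_ncard_ne_zero (by omega)
  have hrC : r C = (C.ncard : ℤ) - 1 := by
    have h1 : r (C \ {x}) = ((C \ {x}).ncard : ℤ) := hCirc.2 _ (Set.sdiff_singleton_ssubset.2 hx)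
    have h2 : (C \ {x}).ncard = C.ncard - 1 := Set.ncard_diff_singleton_of_mem hx
    have h3' : ((C.ncard - 1 : ℕ) : ℤ) = (C.ncard : ℤ) - 1 := by
      have h4 : 1 ≤ C.ncard := by omega
      omega
    have hmono : r (C \ {x}) ≤ r C := hr.2.1 _ _ Set.diff_subset
    have hlt : r C < (C.ncard : ℤ) := by exact_mod_cast hCirc.1
    rw [h1, h2, h3'] at hmono
    omega
  have hprop : ∀ K : Finset (Fin 3), K ≠ Finset.univ →
      r (∅ ∪ ⋃ i ∈ K, A i) = (((∅ ∪ ⋃ i ∈ K, A i) : Set J).ncard : ℤ) := by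
    intro K hK
    have hj : ∃ j, j ∉ K := by
      by_contra hall
      push_neg at hall
      exact hK (Finset.eq_univ_iff_forall.2 hall)
    obtain ⟨j, hj⟩ := hj
    have hss : ((∅ ∪ ⋃ i ∈ K, A i) : Set J) ⊂ C := by
      rw [Set.empty_union]
      constructor
      · exact Set.iUnion₂_subset fun i _ => hAC i
      · intro hsup
        obtain ⟨z, hz⟩ := hne j
        have hzC : z ∈ C := hAC j hz
        have hzU := hsup hzC
        simp only [Set.mem_iUnion] at hzU
        obtain ⟨i, hiK, hzi⟩ := hzU
        have hij : i ≠ j := fun h => hj (h ▸ hiK)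
        exact (hdisj i j hij).le_bot ⟨hzi, hz⟩
    rw [Set.empty_union] at hss ⊢
    exact hCirc.2 _ hss
  have hCu : ((∅ ∪ ⋃ i ∈ (Finset.univ : Finset (Fin 3)), A i) : Set J) = C := by
    rw [Set.empty_union, ← hU]
    ext z
    simp
  have hzero : altSumZ (fun X => ((X.ncard : ℤ))) ∅ A = 0 := by
    rw [key_card]
    have hI : ((∅ᶜ ∩ ⋂ i, A i) : Set J) = ∅ := by
      ext z
      simp only [Set.mem_inter_iff, Set.mem_iInter, Set.mem_empty_iff_false, iff_false,
        not_and, Set.mem_compl_iff]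
      intro _ hz
      exact (hdisj 0 1 (by decide)).le_bot ⟨hz 0, hz 1⟩
    rw [hI]
    simp
  have hsplit : altSumZ r ∅ A - altSumZ (fun X => ((X.ncard : ℤ))) ∅ A = 1 := by
    unfold altSumZ
    rw [← Finset.sum_sub_distrib]
    rw [Finset.sum_eq_single_of_mem Finset.univ (Finset.mem_univ _)
      (fun K _ hK => by rw [hprop K hK]; ring)]
    rw [hCu, hrC]
    simp [Finset.card_univ]
  omega
end Aux

theorem stmt10 {J : Type*} [Fintype J] (r : Set J → ℤ)
    (hr : IsRankFn r) (hloopless : ∀ x : J, r {x} = 1) :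
    ((∀ (A₀ : Set J) (A : Fin 3 → Set J), altSumZ r A₀ A ≤ 0) ↔
      (∀ C : Set J, IsCircuit r C → C.ncard ≤ 2)) ∧
    (∀ C : Set J, IsCircuit r C → 3 ≤ C.ncard →
      ∀ A : Fin 3 → Set J, (∀ i, (A i).Nonempty) →
        (∀ i j, i ≠ j → Disjoint (A i) (A j)) → (⋃ i, A i) = C →
        altSumZ r ∅ A = 1) := by
  classical
  constructor
  · constructor
    · -- alternating → circuits small
      intro h C hCirc
      by_contra h3
      push_neg at h3
      obtain ⟨a, b, ha, hb, hab⟩ := (Set.one_lt_ncard_iff (Set.toFinite C)).1 (by omega)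
      set A : Fin 3 → Set J :=
        fun i => if i = 0 then {a} else if i = 1 then {b} else C \ {a, b} with hA
      have habC : ({a, b} : Set J).ncard = 2 := Set.ncard_pair hab
      have hival : ∀ i : Fin 3, i = 0 ∨ i = 1 ∨ i = 2 := by decide
      have hA0 : A 0 = {a} := by simp [hA]
      have hA1 : A 1 = {b} := by simp [hA]
      have hA2 : A 2 = C \ {a, b} := by simp [hA]
      have hne : ∀ i, (A i).Nonempty := by
        intro i
        rcases hival i with rfl | rfl | rfl
        · rw [hA0]; exact ⟨a, rfl⟩
        · rw [hA1]; exact ⟨b, rfl⟩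
        · rw [hA2]
          by_contra hemp
          rw [Set.not_nonempty_iff_eq_empty, Set.diff_eq_empty] at hemp
          have := Set.ncard_le_ncard hemp (Set.toFinite _)
          omega
      have hD1 : Disjoint ({a} : Set J) {b} := by simp [hab]
      have hD2 : Disjoint ({a} : Set J) (C \ {a, b}) := by
        rw [Set.disjoint_left]
        intro z hz hz2
        rw [Set.mem_singleton_iff] at hz
        subst hz
        exact hz2.2 (Or.inl rfl)
      have hD3 : Disjoint ({b} : Set J) (C \ {a, b}) := by
        rw [Set.disjoint_left]
        intro z hz hz2
        rw [Set.mem_singleton_iff] at hz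
        subst hz
        exact hz2.2 (Or.inr rfl)
      have hdisj : ∀ i j, i ≠ j → Disjoint (A i) (A j) := by
        intro i j hij
        rcases hival i with rfl | rfl | rfl <;> rcases hival j with rfl | rfl | rfl <;>
          first
            | exact absurd rfl hij
            | (rw [hA0, hA1]; exact hD1)
            | (rw [hA0, hA2]; exact hD2)
            | (rw [hA1, hA0]; exact hD1.symm)
            | (rw [hA1, hA2]; exact hD3)
            | (rw [hA2, hA0]; exact hD2.symm)
            | (rw [hA2, hA1]; exact hD3.symm)
      have hU : (⋃ i, A i) = C := by
        ext z
        simp only [Set.mem_iUnion]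
        constructor
        · rintro ⟨i, hi⟩
          rcases hival i with rfl | rfl | rfl
          · rw [hA0] at hi; rw [Set.mem_singleton_iff] at hi; subst hi; exact ha
          · rw [hA1] at hi; rw [Set.mem_singleton_iff] at hi; subst hi; exact hb
          · rw [hA2] at hi; exact hi.1
        · intro hz
          by_cases hza : z = a
          · exact ⟨0, by rw [hA0]; simp [hza]⟩
          · by_cases hzb : z = b
            · exact ⟨1, by rw [hA1]; simp [hzb]⟩
            · exact ⟨2, by rw [hA2]; exact ⟨hz, by simp [hza, hzb]⟩⟩
      have h1 := circuit_altSum r hr C hCirc (by omega) A hne hdisj hU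
      have h2 := h ∅ A
      omega
    · -- circuits small → alternating
      intro hC A₀ A
      haveI : Fintype (Set J) := Fintype.ofFinite _
      have him : ∀ K : Finset (Fin 3), r (A₀ ∪ ⋃ i ∈ K, A i)
          = ((((parCls r '' A₀) ∪ ⋃ i ∈ K, parCls r '' (A i)).ncard : ℕ) : ℤ) := by
        intro K
        rw [rank_eq_classes r hr hloopless hC]
        congr 2
        rw [Set.image_union]
        congr 1
        exact Set.image_iUnion₂ _ _
      have heq : altSumZ r A₀ A
          = altSumZ (fun X => ((X.ncard : ℤ))) (parCls r '' A₀) (fun i => parCls r '' A i) := by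
        unfold altSumZ
        exact Finset.sum_congr rfl fun K _ => by rw [him K]
      rw [heq, key_card]
      simp
  · intro C hCirc h3 A hne hdisj hU
    exact circuit_altSum r hr C hCirc h3 A hne hdisj hU
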